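/- For 1 ≤ m ≤ n, the m-th elementary symmetric polynomial σ_m satisfies the comparison property on the positive orthant: for all λ ∈ ℝ^n with all λ_i > 0, (σ_m(λ)/binom(n,m))^{1/m} ≥ (λ_1 ⋯ λ_n)^{1/n}. (Maclaurin's inequality.) -/

import Mathlib

/-- Maclaurin's inequality: for `1 ≤ m ≤ n` and `λ ∈ ℝ^n` with all coordinates positive,
`(σ_m(λ) / (n choose m))^(1/m) ≥ (λ₁ ⋯ λ_n)^(1/n)`. -/
theorem stmt5 (n m : ℕ) (hm1 : 1 ≤ m) (hmn : m ≤ n)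
    (lam : Fin n → ℝ) (hpos : ∀ i, 0 < lam i) :
    ((∑ s ∈ Finset.powersetCard m (Finset.univ : Finset (Fin n)), ∏ i ∈ s, lam i) /
        (n.choose m)) ^ ((m : ℝ)⁻¹) ≥ (∏ i, lam i) ^ ((n : ℝ)⁻¹) := by
  classical
  have hn1 : 1 ≤ n := le_trans hm1 hmn
  set P := Finset.powersetCard m (Finset.univ : Finset (Fin n)) with hP
  set N := n.choose m with hN
  set k := (n - 1).choose (m - 1) with hk
  have hNpos : 0 < N := Nat.choose_pos hmn
  have hcardP : P.card = N := by
    simp [hP, hN, Finset.card_powersetCard]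
  -- counting: each i lies in `k` of the m-subsets
  have hcount : ∀ i : Fin n,
      (P.filter (fun S => i ∈ S)).card = k := by
    intro i
    have : (P.filter (fun S => i ∈ S)).card =
        (Finset.powersetCard (m - 1) ((Finset.univ : Finset (Fin n)).erase i)).card := by
      refine Finset.card_nbij' (fun S => S.erase i) (fun T => insert i T) ?_ ?_ ?_ ?_
      · intro S hS
        simp only [Finset.mem_coe, Finset.mem_filter, hP, Finset.mem_powersetCard] at hS
        rcases hS with ⟨⟨hsub, hcard⟩, hiS⟩
        refine Finset.mem_powersetCard.2 ⟨?_, ?_⟩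
        · intro x hx
          simp only [Finset.mem_erase] at hx ⊢
          exact ⟨hx.1, Finset.mem_univ x⟩
        · rw [Finset.card_erase_of_mem hiS, hcard]
      · intro T hT
        simp only [Finset.mem_coe, Finset.mem_powersetCard] at hT
        rcases hT with ⟨hsub, hcard⟩
        have hiT : i ∉ T := fun h => by
          have := hsub h; simp at this
        refine Finset.mem_filter.2 ⟨Finset.mem_powersetCard.2 ⟨Finset.subset_univ _, ?_⟩,
          Finset.mem_insert_self i T⟩
        rw [Finset.card_insert_of_notMem hiT, hcard]
        omega
      · intro S hS
        simp only [Finset.mem_coe, Finset.mem_filter] at hS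
        exact Finset.insert_erase hS.2
      · intro T hT
        simp only [Finset.mem_coe, Finset.mem_powersetCard] at hT
        have hiT : i ∉ T := fun h => by
          have := hT.1 h; simp at this
        exact Finset.erase_insert hiT
    rw [this, Finset.card_powersetCard, Finset.card_erase_of_mem (Finset.mem_univ i),
      Finset.card_univ, Fintype.card_fin]
  -- product over all m-subsets
  have hprodP : ∏ S ∈ P, ∏ i ∈ S, lam i = (∏ i, lam i) ^ k := by
    rw [Finset.prod_comm' (t' := (Finset.univ : Finset (Fin n)))
      (s' := fun i => P.filter (fun S => i ∈ S))
      (fun S i => by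
        simp only [Finset.mem_filter, Finset.mem_univ, and_true, true_and])]
    rw [← Finset.prod_pow]
    refine Finset.prod_congr rfl fun i _ => ?_
    rw [Finset.prod_const, hcount i]
  have hPpos : 0 < ∏ i, lam i := Finset.prod_pos fun i _ => hpos i
  -- AM-GM
  have hAM := Real.geom_mean_le_arith_mean_weighted P (fun _ => (N : ℝ)⁻¹)
    (fun S => ∏ i ∈ S, lam i) (fun _ _ => by positivity)
    (by
      rw [Finset.sum_const, hcardP, nsmul_eq_mul]
      field_simp)
    (fun S _ => Finset.prod_nonneg fun i _ => (hpos i).le)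
  have hzpos : ∀ S ∈ P, (0:ℝ) ≤ ∏ i ∈ S, lam i :=
    fun S _ => Finset.prod_nonneg fun i _ => (hpos i).le
  have hlhs : ∏ S ∈ P, (∏ i ∈ S, lam i) ^ ((N : ℝ)⁻¹) =
      (∏ i, lam i) ^ ((k : ℝ) * (N : ℝ)⁻¹) := by
    rw [Real.finset_prod_rpow P _ hzpos, hprodP, ← Real.rpow_natCast (∏ i, lam i) k,
      ← Real.rpow_mul hPpos.le]
  have hrhs : ∑ S ∈ P, (N : ℝ)⁻¹ * ∏ i ∈ S, lam i =
      (∑ S ∈ P, ∏ i ∈ S, lam i) / N := by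
    rw [← Finset.mul_sum]; ring
  rw [hlhs, hrhs] at hAM
  -- the exponent identity: k/N = m/n
  have hnat : n * k = m * N := by
    have := Nat.add_one_mul_choose_eq (n - 1) (m - 1)
    have h1 : n - 1 + 1 = n := by omega
    have h2 : m - 1 + 1 = m := by omega
    rw [h1, h2] at this
    rw [hk, hN, this]; ring
  have hexp : (k : ℝ) * (N : ℝ)⁻¹ = (m : ℝ) / n := by
    have hn0 : (n : ℝ) ≠ 0 := by positivity
    have hN0 : (N : ℝ) ≠ 0 := by positivity
    field_simp
    have h : ((n : ℝ) * k) = (m : ℝ) * N := by exact_mod_cast hnat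
    linarith [h]
  rw [hexp] at hAM
  -- conclude
  have hstep : ((∏ i, lam i) ^ ((m : ℝ) / n)) ^ ((m : ℝ)⁻¹) ≤
      ((∑ S ∈ P, ∏ i ∈ S, lam i) / N) ^ ((m : ℝ)⁻¹) :=
    Real.rpow_le_rpow (Real.rpow_nonneg hPpos.le _) hAM (by positivity)
  have hfin : ((∏ i, lam i) ^ ((m : ℝ) / n)) ^ ((m : ℝ)⁻¹) =
      (∏ i, lam i) ^ ((n : ℝ)⁻¹) := by
    rw [← Real.rpow_mul hPpos.le]
    congr 1
    have hm0 : (m : ℝ) ≠ 0 := by positivity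
    field_simp
  rw [hfin] at hstep
  exact hstep
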